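/- arXiv:2605.10964 — 7 statements merged into one kernel-verified Lean document; each statement's English description precedes it below -/
import Mathlib

section
/- Let ι and Y be nonempty finite types. Let x, q : ι → ℝ be probability vectors with x i > 0, q i > 0 for all i and ∑_i x i = ∑_i q i = 1, and for each i let P i : Y → ℝ be a probability mass function (P i y ≥ 0 and ∑_y P i y = 1). Define the mixtures M_x y = ∑_i x i * P i y and M_q y = ∑_i q i * P i y. Then ∑_{y} M_x y * Real.log (M_x y / M_q y) ≤ ∑_{i} x i * Real.log (x i / q i), where terms with M_x y = 0 contribute 0. -/
/-- Elementary inequality: for `a ≥ 0`, `c > 0`, `a - c ≤ a * log (a / c)`. -/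
lemma aux_sub_le_mul_log {a c : ℝ} (ha : 0 ≤ a) (hc : 0 < c) :
    a - c ≤ a * Real.log (a / c) := by
  rcases eq_or_lt_of_le ha with h | h
  · simp [← h]; linarith
  · have h1 : Real.log (c / a) ≤ c / a - 1 :=
      Real.log_le_sub_one_of_pos (div_pos hc h)
    have h2 : Real.log (a / c) = - Real.log (c / a) := by
      rw [← Real.log_inv, inv_div]
    have h3 : 1 - c / a ≤ Real.log (a / c) := by rw [h2]; linarith
    have := mul_le_mul_of_nonneg_left h3 (le_of_lt h)
    calc a - c = a * (1 - c / a) := by field_simp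
    _ ≤ a * Real.log (a / c) := this

/-- Proposition 2: the KL divergence between two finite mixtures of the same
component pmfs `P i`, with mixing weights `x` and `q`, is bounded above by the
KL divergence between the mixing weight vectors. -/
theorem mixture_kl_le_mixing_kl
    {ι Y : Type*} [Fintype ι] [Nonempty ι] [Fintype Y] [Nonempty Y]
    (x q : ι → ℝ) (hx : ∀ i, 0 < x i) (hq : ∀ i, 0 < q i)
    (hxs : ∑ i, x i = 1) (hqs : ∑ i, q i = 1)
    (P : ι → Y → ℝ) (hP : ∀ i y, 0 ≤ P i y) (hPs : ∀ i, ∑ y, P i y = 1) :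
    ∑ y, (∑ i, x i * P i y) * Real.log ((∑ i, x i * P i y) / (∑ i, q i * P i y))
      ≤ ∑ i, x i * Real.log (x i / q i) := by
  have perY : ∀ y : Y,
      (∑ i, x i * P i y) * Real.log ((∑ i, x i * P i y) / (∑ i, q i * P i y))
        ≤ ∑ i, x i * P i y * Real.log (x i / q i) := by
    intro y
    set A := ∑ i, x i * P i y with hA
    set B := ∑ i, q i * P i y with hB
    have hAnn : ∀ i ∈ Finset.univ, (0:ℝ) ≤ x i * P i y := fun i _ =>
      mul_nonneg (hx i).le (hP i y)
    have hBnn : ∀ i ∈ Finset.univ, (0:ℝ) ≤ q i * P i y := fun i _ =>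
      mul_nonneg (hq i).le (hP i y)
    have hA0 : 0 ≤ A := Finset.sum_nonneg hAnn
    rcases eq_or_lt_of_le hA0 with hAz | hApos
    · -- A = 0 : all terms vanish
      have hall : ∀ i ∈ Finset.univ, x i * P i y = 0 :=
        (Finset.sum_eq_zero_iff_of_nonneg hAnn).mp hAz.symm
      have : ∑ i, x i * P i y * Real.log (x i / q i) = 0 :=
        Finset.sum_eq_zero fun i hi => by rw [hall i hi, zero_mul]
      rw [this, ← hAz, zero_mul]
    · -- A > 0, so some P i y > 0 and B > 0
      obtain ⟨i₀, hi₀, hpos⟩ : ∃ i ∈ Finset.univ, 0 < x i * P i y := by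
        by_contra hcon
        push_neg at hcon
        have : A ≤ 0 := Finset.sum_nonpos fun i hi => hcon i hi
        linarith
      have hP0 : 0 < P i₀ y := by
        by_contra hP0
        push_neg at hP0
        have : P i₀ y = 0 := le_antisymm hP0 (hP i₀ y)
        rw [this, mul_zero] at hpos; exact lt_irrefl 0 hpos
      have hBpos : 0 < B :=
        Finset.sum_pos' hBnn ⟨i₀, Finset.mem_univ i₀, mul_pos (hq i₀) hP0⟩
      -- per-i inequality
      have hper : ∀ i ∈ Finset.univ,
          x i * P i y * Real.log (A / B) + (x i * P i y - q i * P i y * (A / B))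
            ≤ x i * P i y * Real.log (x i / q i) := by
        intro i _
        rcases eq_or_lt_of_le (hP i y) with hz | hpz
        · rw [← hz]; simp
        · set a := x i * P i y with ha
          set b := q i * P i y with hb
          have hap : 0 < a := mul_pos (hx i) hpz
          have hbp : 0 < b := mul_pos (hq i) hpz
          have hcp : 0 < b * (A / B) := mul_pos hbp (div_pos hApos hBpos)
          have hkey := aux_sub_le_mul_log hap.le hcp
          have hac : a / (b * (A / B)) = (x i / q i) / (A / B) := by
            rw [ha, hb]
            field_simp [hpz.ne', (hq i).ne', hApos.ne', hBpos.ne']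
          have hlog : Real.log (a / (b * (A / B)))
              = Real.log (x i / q i) - Real.log (A / B) := by
            rw [hac, Real.log_div (div_pos (hx i) (hq i)).ne'
              (div_pos hApos hBpos).ne']
          rw [hlog] at hkey
          nlinarith [hkey]
      have hsum := Finset.sum_le_sum hper
      rw [Finset.sum_add_distrib, ← Finset.sum_mul, Finset.sum_sub_distrib,
        ← Finset.sum_mul] at hsum
      have hBB : B * (A / B) = A := by field_simp
      rw [← hA, ← hB, hBB, sub_self, add_zero] at hsum
      exact hsum
  calc ∑ y, (∑ i, x i * P i y) * Real.log ((∑ i, x i * P i y) / (∑ i, q i * P i y))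
      ≤ ∑ y, ∑ i, x i * P i y * Real.log (x i / q i) :=
        Finset.sum_le_sum fun y _ => perY y
    _ = ∑ i, ∑ y, x i * P i y * Real.log (x i / q i) := Finset.sum_comm
    _ = ∑ i, x i * Real.log (x i / q i) := by
        refine Finset.sum_congr rfl fun i _ => ?_
        calc ∑ y, x i * P i y * Real.log (x i / q i)
            = (x i * Real.log (x i / q i)) * ∑ y, P i y := by
              rw [Finset.mul_sum]; exact Finset.sum_congr rfl fun y _ => by ring
          _ = x i * Real.log (x i / q i) := by rw [hPs i, mul_one]
end

section
/- Let q > 0, λ > 0, R > 0, r ∈ ℝ, define f : ℝ → ℝ by f(b) = q * Real.exp (q * b / λ) / (q * Real.exp (q * b / λ) + R), and define the per-click payment p(b) = b * (f(b) − 1) + r + (λ / q) * Real.log (f(b) / f(r)). Then for every v ≥ r, the truthful per-click utility satisfies v * f(v) − p(v) = ∫_{r}^{v} f(z) dz ≥ 0, and at v = r the utility is exactly 0. -/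
/-- Individual rationality of the single-allocation mechanism (Theorem 4):
with the Myerson payment `p b = b * (f b - 1) + r + (λ / q) * log (f b / f r)`,
the truthful per-click utility equals the envelope integral
`∫ z in r..v, f z ≥ 0` for every `v ≥ r`, and is exactly 0 at `v = r`. -/
theorem myerson_payment_ir
    (q lam R r : ℝ) (hq : 0 < q) (hlam : 0 < lam) (hR : 0 < R)
    (f : ℝ → ℝ)
    (hf : ∀ b, f b = q * Real.exp (q * b / lam) / (q * Real.exp (q * b / lam) + R))
    (p : ℝ → ℝ)
    (hp : ∀ b, p b = b * (f b - 1) + r + (lam / q) * Real.log (f b / f r)) :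
    (∀ v : ℝ, r ≤ v →
        v * f v - p v = ∫ z in r..v, f z ∧ 0 ≤ ∫ z in r..v, f z)
      ∧ r * f r - p r = 0 := by
  set g : ℝ → ℝ := fun z => q * Real.exp (q * z / lam) + R with hg
  have hgpos : ∀ z, 0 < g z := fun z =>
    add_pos (mul_pos hq (Real.exp_pos _)) hR
  have hNpos : ∀ z, 0 < q * Real.exp (q * z / lam) := fun z =>
    mul_pos hq (Real.exp_pos _)
  have hfpos : ∀ z, 0 < f z := by
    intro z; rw [hf]; exact div_pos (hNpos z) (hgpos z)
  set F : ℝ → ℝ := fun z => (lam / q) * Real.log (g z) with hF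
  have hderiv : ∀ z : ℝ, HasDerivAt F (f z) z := by
    intro z
    have h1 : HasDerivAt (fun z : ℝ => q * z / lam) (q / lam) z := by
      simpa using ((hasDerivAt_id z).const_mul q).div_const lam
    have h2 : HasDerivAt (fun z : ℝ => Real.exp (q * z / lam))
        (Real.exp (q * z / lam) * (q / lam)) z := (Real.hasDerivAt_exp _).comp z h1
    have h3 : HasDerivAt g (q * (Real.exp (q * z / lam) * (q / lam))) z := by
      simpa [hg] using (h2.const_mul q).add_const R
    have h4 : HasDerivAt F ((lam / q) * (q * (Real.exp (q * z / lam) * (q / lam)) / g z)) z := by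
      exact ((h3.log (hgpos z).ne')).const_mul (lam / q)
    convert h4 using 1
    rw [hf]
    have hgz : q * Real.exp (q * z / lam) + R ≠ 0 := (hgpos z).ne'
    simp only [hg]
    field_simp
  have hfc : Continuous f := by
    have : Continuous g := by
      continuity
    have hfall : f = fun z => q * Real.exp (q * z / lam) / g z := funext hf
    rw [hfall]
    exact (continuous_const.mul (Real.continuous_exp.comp (by continuity))).div this
      (fun z => (hgpos z).ne')
  have hint : ∀ v : ℝ, r ≤ v → (∫ z in r..v, f z) = F v - F r := by
    intro v hv
    exact intervalIntegral.integral_eq_sub_of_hasDerivAt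
      (fun z _ => hderiv z) (hfc.intervalIntegrable r v)
  have hlogf : ∀ b : ℝ, Real.log (f b) = Real.log q + q * b / lam - Real.log (g b) := by
    intro b
    rw [hf, Real.log_div (hNpos b).ne' (hgpos b).ne', Real.log_mul hq.ne' (Real.exp_pos _).ne',
      Real.log_exp]
  have hkey : ∀ v : ℝ, v * f v - p v = F v - F r := by
    intro v
    rw [hp, Real.log_div (hfpos v).ne' (hfpos r).ne', hlogf, hlogf, hF]
    have hq' : q ≠ 0 := hq.ne'
    have hlam' : lam ≠ 0 := hlam.ne'
    field_simp
    ring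
  refine ⟨fun v hv => ⟨by rw [hint v hv, hkey], ?_⟩, ?_⟩
  · exact intervalIntegral.integral_nonneg hv (fun z _ => (hfpos z).le)
  · rw [hkey r]; ring
end

section
/- Let q > 0, λ > 0, R > 0, r ∈ ℝ, define f : ℝ → ℝ by f(b) = q * Real.exp (q * b / λ) / (q * Real.exp (q * b / λ) + R), and define the per-click payment p(b) = b * (f(b) − 1) + r + (λ / q) * Real.log (f(b) / f(r)). Then the mechanism is dominant-strategy incentive compatible on [r, ∞): for all v ≥ r and all b ≥ r, v * f(v) − p(v) ≥ v * f(b) − p(b). -/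
/-- Incentive-compatibility direction of Theorem 4: with the softmax allocation
`f` and the Myerson payment `p b = b * (f b - 1) + r + (λ / q) * log (f b / f r)`,
truthful bidding is a dominant strategy on `[r, ∞)`. -/
theorem myerson_payment_dsic
    (q lam R r : ℝ) (hq : 0 < q) (hlam : 0 < lam) (hR : 0 < R)
    (f : ℝ → ℝ)
    (hf : ∀ b, f b = q * Real.exp (q * b / lam) / (q * Real.exp (q * b / lam) + R))
    (p : ℝ → ℝ)
    (hp : ∀ b, p b = b * (f b - 1) + r + (lam / q) * Real.log (f b / f r)) :
    ∀ v : ℝ, r ≤ v → ∀ b : ℝ, r ≤ b → v * f v - p v ≥ v * f b - p b := by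
  intro v hv b hb
  set A : ℝ → ℝ := fun t => q * Real.exp (q * t / lam) + R with hA
  have hApos : ∀ t, 0 < A t := fun t => by positivity
  have hfpos : ∀ t, 0 < f t := fun t => by rw [hf t]; positivity
  -- derivative of g = (lam/q) * log ∘ A is f
  have hg : ∀ t : ℝ, HasDerivAt (fun s => (lam / q) * Real.log (A s)) (f t) t := by
    intro t
    have h1 : HasDerivAt (fun s : ℝ => q * s / lam) (q / lam) t := by
      simpa using ((hasDerivAt_id t).const_mul q).div_const lam
    have h2 : HasDerivAt (fun s : ℝ => Real.exp (q * s / lam))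
        (Real.exp (q * t / lam) * (q / lam)) t := h1.exp
    have h3 : HasDerivAt A (q * (Real.exp (q * t / lam) * (q / lam))) t :=
      (h2.const_mul q).add_const R
    have h4 : HasDerivAt (fun s => Real.log (A s))
        (q * (Real.exp (q * t / lam) * (q / lam)) / A t) t :=
      h3.log (ne_of_gt (hApos t))
    have h5 := h4.const_mul (lam / q)
    refine h5.congr_deriv ?_
    rw [hf t]
    have := (hApos t)
    simp only [hA]
    field_simp
  -- f is monotone
  have hfmono : ∀ s t : ℝ, s ≤ t → f s ≤ f t := by
    intro s t hst
    rw [hf s, hf t]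
    have hes : (0:ℝ) < Real.exp (q * s / lam) := Real.exp_pos _
    have het : (0:ℝ) < Real.exp (q * t / lam) := Real.exp_pos _
    have hE : Real.exp (q * s / lam) ≤ Real.exp (q * t / lam) := by
      apply Real.exp_le_exp.mpr
      gcongr

    rw [div_le_div_iff₀ (by positivity) (by positivity)]
    nlinarith [mul_le_mul_of_nonneg_left hE (mul_pos hq hR).le]
  -- convexity inequality via MVT
  have key : ∀ s t : ℝ,
      (lam / q) * Real.log (A t) - (lam / q) * Real.log (A s) ≥ f s * (t - s) := by
    intro s t
    rcases lt_trichotomy s t with h | h | h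
    · obtain ⟨c, hc, hceq⟩ := exists_hasDerivAt_eq_slope
        (fun x => (lam / q) * Real.log (A x)) f h
        (fun x _ => (hg x).continuousAt.continuousWithinAt)
        (fun x _ => hg x)
      have hfc : f s ≤ f c := hfmono s c hc.1.le
      have ht : (0:ℝ) < t - s := by linarith
      have : (lam / q) * Real.log (A t) - (lam / q) * Real.log (A s) = f c * (t - s) := by
        field_simp at hceq ⊢
        linarith [hceq]
      rw [this]
      exact mul_le_mul_of_nonneg_right hfc ht.le
    · simp [h]
    · obtain ⟨c, hc, hceq⟩ := exists_hasDerivAt_eq_slope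
        (fun x => (lam / q) * Real.log (A x)) f h
        (fun x _ => (hg x).continuousAt.continuousWithinAt)
        (fun x _ => hg x)
      have hfc : f c ≤ f s := hfmono c s hc.2.le
      have ht : (0:ℝ) < s - t := by linarith
      have heq : (lam / q) * Real.log (A s) - (lam / q) * Real.log (A t) = f c * (s - t) := by
        field_simp at hceq ⊢
        linarith [hceq]
      nlinarith [mul_le_mul_of_nonneg_right hfc ht.le]
  -- log decomposition
  have hlogf : ∀ t : ℝ, Real.log (f t) = Real.log q + q * t / lam - Real.log (A t) := by
    intro t
    rw [hf t]
    rw [Real.log_div (by positivity) (ne_of_gt (hApos t)),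
      Real.log_mul (ne_of_gt hq) (Real.exp_ne_zero _), Real.log_exp]
  have hexpand : v * f v - p v - (v * f b - p b)
      = ((lam / q) * Real.log (A v) - (lam / q) * Real.log (A b)) - f b * (v - b) := by
    rw [hp v, hp b,
      Real.log_div (ne_of_gt (hfpos v)) (ne_of_gt (hfpos r)),
      Real.log_div (ne_of_gt (hfpos b)) (ne_of_gt (hfpos r)),
      hlogf v, hlogf b, hlogf r]
    field_simp
    ring
  have := key b v
  linarith
end

section
/- Let q > 0, λ > 0, R > 0, r ∈ ℝ, and define f : ℝ → ℝ by f(b) = q * Real.exp (q * b / λ) / (q * Real.exp (q * b / λ) + R). Suppose p̂ : ℝ → ℝ is any payment rule such that for all v ≥ r and b ≥ r, v * f(v) − p̂(v) ≥ v * f(b) − p̂(b). Then for every v ≥ r, p̂(v) = v * f(v) − ∫_{r}^{v} f(z) dz − (r * f(r) − p̂(r)); that is, p̂ agrees up to the additive constant (r f(r) − p̂(r)) with the Myerson payment p(v) = v (f(v) − 1) + r + (λ/q) log(f(v)/f(r)). -/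
open Topology Filter


/-- Uniqueness (necessity) part of Theorem 4 (Myerson's envelope
characterization): any payment rule `p̂` making the softmax allocation `f`
dominant-strategy incentive compatible on `[r, ∞)` agrees, up to the additive
constant `r * f r - p̂ r`, with the Myerson payment
`v * f v - ∫ z in r..v, f z`. -/
theorem myerson_payment_unique
    (q lam R r : ℝ) (hq : 0 < q) (hlam : 0 < lam) (hR : 0 < R)
    (f : ℝ → ℝ)
    (hf : ∀ b, f b = q * Real.exp (q * b / lam) / (q * Real.exp (q * b / lam) + R))
    (phat : ℝ → ℝ)
    (hdsic : ∀ v : ℝ, r ≤ v → ∀ b : ℝ, r ≤ b →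
      v * f v - phat v ≥ v * f b - phat b) :
    ∀ v : ℝ, r ≤ v →
      phat v = v * f v - (∫ z in r..v, f z) - (r * f r - phat r) := by
  -- utility function
  set U : ℝ → ℝ := fun x => x * f x - phat x with hU
  -- basic properties of f
  have hden : ∀ b : ℝ, 0 < q * Real.exp (q * b / lam) + R := fun b => by positivity
  have hf0 : ∀ b : ℝ, 0 ≤ f b := fun b => by
    rw [hf b]; positivity
  have hf1 : ∀ b : ℝ, f b ≤ 1 := fun b => by
    rw [hf b, div_le_one (hden b)]
    nlinarith [Real.exp_pos (q * b / lam)]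
  have hfc : Continuous f := by
    have : f = fun b => q * Real.exp (q * b / lam) / (q * Real.exp (q * b / lam) + R) :=
      funext hf
    rw [this]
    exact (continuous_const.mul ((continuous_const.mul continuous_id).div_const lam).rexp).div
      (((continuous_const.mul ((continuous_const.mul continuous_id).div_const lam).rexp)).add
        continuous_const) (fun b => (hden b).ne')
  -- key envelope inequality
  have key : ∀ a b : ℝ, r ≤ a → r ≤ b → (b - a) * f a ≤ U b - U a := by
    intro a b ha hb
    have h := hdsic b hb a ha
    simp only [hU]
    nlinarith
  -- slope bound
  have slope_bound : ∀ x w : ℝ, r ≤ x → r ≤ w → w ≠ x →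
      ‖slope U x w - f x‖ ≤ ‖f w - f x‖ := by
    intro x w hx hw hne
    rw [slope_def_field]
    rcases lt_or_gt_of_ne hne with hlt | hgt
    · -- w < x : f w ≤ slope ≤ f x
      have h1 := key x w hx hw  -- (w - x) * f x ≤ U w - U x
      have h2 := key w x hw hx  -- (x - w) * f w ≤ U x - U w
      have hwx : w - x < 0 := by linarith
      have hs1 : (U w - U x) / (w - x) ≤ f x := by
        rw [div_le_iff_of_neg hwx]; linarith
      have hs2 : f w ≤ (U w - U x) / (w - x) := by
        rw [le_div_iff_of_neg hwx]; nlinarith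
      rw [Real.norm_eq_abs, Real.norm_eq_abs, abs_sub_comm (f w)]
      rw [abs_of_nonpos (by linarith), abs_of_nonneg (by linarith : 0 ≤ f x - f w)]
      linarith
    · -- x < w : f x ≤ slope ≤ f w
      have h1 := key x w hx hw  -- (w - x) * f x ≤ U w - U x
      have h2 := key w x hw hx  -- (x - w) * f w ≤ U x - U w
      have hwx : 0 < w - x := by linarith
      have hs1 : f x ≤ (U w - U x) / (w - x) := by
        rw [le_div_iff₀ hwx]; linarith
      have hs2 : (U w - U x) / (w - x) ≤ f w := by
        rw [div_le_iff₀ hwx]; nlinarith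
      rw [Real.norm_eq_abs, Real.norm_eq_abs]
      rw [abs_of_nonneg (by linarith), abs_of_nonneg (by linarith : 0 ≤ f w - f x)]
      linarith
  -- derivative of U at interior points
  have hderiv : ∀ x : ℝ, r < x → HasDerivAt U (f x) x := by
    intro x hx
    rw [hasDerivAt_iff_tendsto_slope]
    rw [← tendsto_sub_nhds_zero_iff]
    have hev : ∀ᶠ w in 𝓝[≠] x, ‖slope U x w - f x‖ ≤ ‖f w - f x‖ := by
      filter_upwards [nhdsWithin_le_nhds (Ioi_mem_nhds hx),
        self_mem_nhdsWithin] with w hw hw'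
      exact slope_bound x w hx.le (le_of_lt hw) hw'
    have hlim : Filter.Tendsto (fun w => ‖f w - f x‖) (𝓝[≠] x) (𝓝 0) := by
      have h0 : Filter.Tendsto (fun w => f w - f x) (𝓝[≠] x) (𝓝 (f x - f x)) :=
        ((hfc.tendsto x).mono_left nhdsWithin_le_nhds).sub tendsto_const_nhds
      simpa using h0.norm
    exact squeeze_zero_norm' hev hlim
  -- Lipschitz continuity of U on [r, ∞)
  have hlip : ∀ a b : ℝ, r ≤ a → r ≤ b → dist (U a) (U b) ≤ 1 * dist a b := by
    intro a b ha hb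
    have h1 := key a b ha hb
    have h2 := key b a hb ha
    rw [Real.dist_eq, Real.dist_eq, one_mul]
    rcases le_total a b with h | h
    · rw [abs_of_nonpos (by linarith : a - b ≤ 0)]
      rw [abs_le]
      constructor <;> nlinarith [hf0 a, hf1 b, hf0 b, hf1 a]
    · rw [abs_of_nonneg (by linarith : 0 ≤ a - b)]
      rw [abs_le]
      constructor <;> nlinarith [hf0 a, hf1 b, hf0 b, hf1 a]
  intro v hv
  have hcont : ContinuousOn U (Set.Icc r v) := by
    apply LipschitzOnWith.continuousOn (K := 1)
    apply LipschitzOnWith.of_dist_le_mul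
    intro a ha b hb
    simpa using hlip a b ha.1 hb.1
  have hint : ∫ z in r..v, f z = U v - U r := by
    apply intervalIntegral.integral_eq_sub_of_hasDeriv_right_of_le hv hcont
    · intro x hx
      exact (hderiv x hx.1).hasDerivWithinAt
    · exact hfc.intervalIntegrable r v
  have : U v = v * f v - phat v := rfl
  have hr : U r = r * f r - phat r := rfl
  rw [hint]
  linarith [this, hr]
end

section
/- Let q > 0, λ > 0, R > 0, r > 0, define f : ℝ → ℝ by f(b) = q * Real.exp (q * b / λ) / (q * Real.exp (q * b / λ) + R), and define the reduced payment p'(b) = b * (f(b) − 1) + r + (λ / q) * Real.log (f(b) / f(r)) − r * f(r) / 2. Then for every v ≥ r, the per-click utility is strictly positive: v * f(v) − p'(v) ≥ r * f(r) / 2 > 0. -/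
/-- Remark after Theorem 4: reducing the Myerson payment by the constant
`r * f r / 2` guarantees strictly positive per-click utility, at least
`r * f r / 2 > 0`, for every eligible bidder `v ≥ r`. -/
theorem reduced_payment_strictly_positive_utility
    (q lam R r : ℝ) (hq : 0 < q) (hlam : 0 < lam) (hR : 0 < R) (hr : 0 < r)
    (f : ℝ → ℝ)
    (hf : ∀ b, f b = q * Real.exp (q * b / lam) / (q * Real.exp (q * b / lam) + R))
    (p' : ℝ → ℝ)
    (hp' : ∀ b, p' b = b * (f b - 1) + r + (lam / q) * Real.log (f b / f r)
      - r * f r / 2) :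
    ∀ v : ℝ, r ≤ v → v * f v - p' v ≥ r * f r / 2 ∧ 0 < r * f r / 2 := by
  intro v hv
  set A := q * Real.exp (q * v / lam) with hA
  set B := q * Real.exp (q * r / lam) with hB
  have hApos : 0 < A := by positivity
  have hBpos : 0 < B := by positivity
  have hfv : f v = A / (A + R) := hf v
  have hfr : f r = B / (B + R) := hf r
  have hfvpos : 0 < f v := by rw [hfv]; positivity
  have hfrpos : 0 < f r := by rw [hfr]; positivity
  have hBA : B ≤ A := by
    rw [hA, hB]
    gcongr
  -- log (f v / f r) ≤ q * (v - r) / lam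
  have hlogfv : Real.log (f v) = Real.log A - Real.log (A + R) := by
    rw [hfv, Real.log_div hApos.ne' (by positivity)]
  have hlogfr : Real.log (f r) = Real.log B - Real.log (B + R) := by
    rw [hfr, Real.log_div hBpos.ne' (by positivity)]
  have hlogA : Real.log A = Real.log q + q * v / lam := by
    rw [hA, Real.log_mul hq.ne' (Real.exp_pos _).ne', Real.log_exp]
  have hlogB : Real.log B = Real.log q + q * r / lam := by
    rw [hB, Real.log_mul hq.ne' (Real.exp_pos _).ne', Real.log_exp]
  have hmono : Real.log (B + R) ≤ Real.log (A + R) := by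
    apply Real.log_le_log (by positivity) (by linarith)
  have hlogdiv : Real.log (f v / f r) ≤ q * (v - r) / lam := by
    rw [Real.log_div hfvpos.ne' hfrpos.ne', hlogfv, hlogfr, hlogA, hlogB]
    have : q * (v - r) / lam = q * v / lam - q * r / lam := by ring
    linarith
  have key : (lam / q) * Real.log (f v / f r) ≤ v - r := by
    have h1 : (lam / q) * Real.log (f v / f r) ≤ (lam / q) * (q * (v - r) / lam) := by
      apply mul_le_mul_of_nonneg_left hlogdiv (by positivity)
    have h2 : (lam / q) * (q * (v - r) / lam) = v - r := by
      field_simp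
    linarith
  refine ⟨?_, by positivity⟩
  have := hp' v
  nlinarith [key]
end

section
/- Let I be a finite type of advertisers and 𝒜 a nonempty finite set of feasible allocations. For each A ∈ 𝒜 and i ∈ I let q A i ≥ 0, and let h : 𝒜 → ℝ with h A ≥ 0. For a bid profile b : I → ℝ define SW(b, A) = h A + ∑_{j} q A j * b j. Fix an advertiser i with true value v_i ≥ 0, competing bids b_{-i} ≥ 0, and a misreport b_i' ≥ 0; let b^v and b' denote the profiles in which i bids v_i and b_i' respectively. Suppose A* maximizes SW(b^v, ·) over 𝒜, Â maximizes SW(b', ·) over 𝒜, and A₋ maximizes SW(b^v, ·) over the nonempty subfamily 𝒜₋ = {A ∈ 𝒜 : q A i = 0} (note SW(b^v, A) = SW(b', A) for A ∈ 𝒜₋). Then the truthful utility q A* i * v_i − (SW(b^v, A₋) − (SW(b^v, A*) − q A* i * v_i)) is at least the misreport utility q Â i * v_i − (SW(b', A₋) − (SW(b', Â) − q Â i * b_i')). -/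
/-- Dominant-strategy incentive compatibility of the screened VCG
multi-allocation auction (Theorem 5): the truthful utility of advertiser `i`
is at least its utility under any misreport `b_i'`. -/
theorem vcg_dsic
    {I α : Type*} [Fintype I]
    (𝒜 : Finset α) (h𝒜 : 𝒜.Nonempty)
    (q : α → I → ℝ) (hq : ∀ A ∈ 𝒜, ∀ i, 0 ≤ q A i)
    (h : α → ℝ) (hh : ∀ A ∈ 𝒜, 0 ≤ h A)
    (SW : (I → ℝ) → α → ℝ)
    (hSW : ∀ b A, SW b A = h A + ∑ j, q A j * b j)
    (i : I) (vi bi' : ℝ) (hvi : 0 ≤ vi) (hbi' : 0 ≤ bi')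
    (bv b' : I → ℝ) (hbvi : bv i = vi) (hb'i : b' i = bi')
    (hagree : ∀ j, j ≠ i → bv j = b' j)
    (hbv : ∀ j, 0 ≤ bv j) (hb' : ∀ j, 0 ≤ b' j)
    (Astar : α) (hAstar : Astar ∈ 𝒜)
    (hAstarMax : ∀ A ∈ 𝒜, SW bv A ≤ SW bv Astar)
    (Ahat : α) (hAhat : Ahat ∈ 𝒜)
    (hAhatMax : ∀ A ∈ 𝒜, SW b' A ≤ SW b' Ahat)
    (Aminus : α) (hAminus : Aminus ∈ 𝒜) (hAminusExcl : q Aminus i = 0)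
    (hAminusMax : ∀ A ∈ 𝒜, q A i = 0 → SW bv A ≤ SW bv Aminus) :
    q Astar i * vi - (SW bv Aminus - (SW bv Astar - q Astar i * vi))
      ≥ q Ahat i * vi - (SW b' Aminus - (SW b' Ahat - q Ahat i * bi')) := by
  classical
  have key : ∀ A, SW bv A - SW b' A = q A i * (vi - bi') := by
    intro A
    rw [hSW, hSW]
    have : ∀ j, q A j * bv j - q A j * b' j =
        (if j = i then q A i * (vi - bi') else 0) := by
      intro j
      by_cases hj : j = i
      · subst hj; simp [hbvi, hb'i, mul_sub]
      · simp [hj, hagree j hj]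
    calc h A + ∑ j, q A j * bv j - (h A + ∑ j, q A j * b' j)
        = ∑ j, (q A j * bv j - q A j * b' j) := by
          rw [Finset.sum_sub_distrib]; ring
      _ = ∑ j, (if j = i then q A i * (vi - bi') else 0) := by
          simp_rw [this]
      _ = q A i * (vi - bi') := by simp
  have hm : SW bv Aminus = SW b' Aminus := by
    have := key Aminus; rw [hAminusExcl] at this; linarith
  have h1 := hAstarMax Ahat hAhat
  have k2 := key Ahat
  nlinarith [k2, h1, hm]
end

section
/- Let f : Set.Ioc (0:ℝ) 1 → ℝ (equivalently, f defined on (0,1]) be strictly increasing, continuous, and strictly positive, and suppose that for all η, x, x' ∈ (0,1] with η*x ∈ (0,1] and η*x' ∈ (0,1], one has f(η*x) / f(η*x') = f(x) / f(x'). Then there exist η₀ > 0 and β > 0 such that f(x) = η₀ * x ^ β for all x ∈ (0,1]. -/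
/-- Proposition A.1: a strictly increasing, continuous, strictly positive
function on `(0,1]` satisfying the relative welfare invariance
`f(ηx)/f(ηx') = f(x)/f(x')` must be a power function `f x = η₀ * x ^ β`
with `η₀ > 0` and `β > 0`. -/
theorem organic_welfare_power_characterization
    (f : ℝ → ℝ)
    (hmono : StrictMonoOn f (Set.Ioc (0:ℝ) 1))
    (hcont : ContinuousOn f (Set.Ioc (0:ℝ) 1))
    (hpos : ∀ x ∈ Set.Ioc (0:ℝ) 1, 0 < f x)
    (hinv : ∀ η ∈ Set.Ioc (0:ℝ) 1, ∀ x ∈ Set.Ioc (0:ℝ) 1, ∀ x' ∈ Set.Ioc (0:ℝ) 1,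
      η * x ∈ Set.Ioc (0:ℝ) 1 → η * x' ∈ Set.Ioc (0:ℝ) 1 →
      f (η * x) / f (η * x') = f x / f x') :
    ∃ η₀ > (0:ℝ), ∃ β > (0:ℝ), ∀ x ∈ Set.Ioc (0:ℝ) 1, f x = η₀ * x ^ β := by
  have h1 : (1:ℝ) ∈ Set.Ioc (0:ℝ) 1 := ⟨one_pos, le_refl 1⟩
  have hf1 : 0 < f 1 := hpos 1 h1
  -- multiplicativity (up to f 1)
  have hmul : ∀ a ∈ Set.Ioc (0:ℝ) 1, ∀ b ∈ Set.Ioc (0:ℝ) 1,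
      f (a * b) * f 1 = f a * f b := by
    intro a ha b hb
    have hab : a * b ∈ Set.Ioc (0:ℝ) 1 :=
      ⟨mul_pos ha.1 hb.1, by
        calc a * b ≤ 1 * 1 := mul_le_mul ha.2 hb.2 hb.1.le one_pos.le
        _ = 1 := one_mul 1⟩
    have := hinv a ha b hb 1 h1 hab (by simpa using ha)
    rw [mul_one] at this
    have hfa : f a ≠ 0 := (hpos a ha).ne'
    have hfb : f b ≠ 0 := (hpos b hb).ne'
    field_simp at this
    linarith [this]
  -- the additive function on [0, ∞)
  set g : ℝ → ℝ := fun t => Real.log (f (Real.exp (-t))) - Real.log (f 1) with hg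
  have hexp_mem : ∀ t : ℝ, 0 ≤ t → Real.exp (-t) ∈ Set.Ioc (0:ℝ) 1 := by
    intro t ht
    exact ⟨Real.exp_pos _, Real.exp_le_one_iff.mpr (by linarith)⟩
  have hgadd : ∀ s t : ℝ, 0 ≤ s → 0 ≤ t → g (s + t) = g s + g t := by
    intro s t hs ht
    have hs' := hexp_mem s hs
    have ht' := hexp_mem t ht
    have key := hmul _ hs' _ ht'
    have hmulexp : Real.exp (-(s + t)) = Real.exp (-s) * Real.exp (-t) := by
      rw [← Real.exp_add]; ring_nf
    have hlog : Real.log (f (Real.exp (-(s+t)))) + Real.log (f 1)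
        = Real.log (f (Real.exp (-s))) + Real.log (f (Real.exp (-t))) := by
      rw [hmulexp, ← Real.log_mul (hpos _ ⟨mul_pos hs'.1 ht'.1,
        by calc Real.exp (-s) * Real.exp (-t) ≤ 1*1 :=
              mul_le_mul hs'.2 ht'.2 ht'.1.le one_pos.le
          _ = 1 := one_mul 1⟩).ne' hf1.ne',
        key, Real.log_mul (hpos _ hs').ne' (hpos _ ht').ne']
    simp only [hg]
    linarith [hlog]
  have hg0 : g 0 = 0 := by
    have := hgadd 0 0 le_rfl le_rfl
    simp at this; linarith
  -- g continuous on [0, ∞)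
  have hgcont : ContinuousOn g (Set.Ici (0:ℝ)) := by
    have hc1 : ContinuousOn (fun t : ℝ => f (Real.exp (-t))) (Set.Ici (0:ℝ)) := by
      apply hcont.comp ((Real.continuous_exp.comp continuous_neg).continuousOn)
      intro t ht
      exact hexp_mem t ht
    have hc2 : ContinuousOn (fun t : ℝ => Real.log (f (Real.exp (-t))))
        (Set.Ici (0:ℝ)) := by
      exact hc1.log (fun t ht => (hpos _ (hexp_mem t ht)).ne')
    exact hc2.sub continuousOn_const
  -- extension to ℝ
  have gdiff : ∀ t c c' : ℝ, 0 ≤ t + c → 0 ≤ c → 0 ≤ t + c' → 0 ≤ c' →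
      g (t + c) - g c = g (t + c') - g c' := by
    intro t c c' h1 h2 h3 h4
    have e1 : g (t + c) + g c' = g (t + c + c') := (hgadd _ _ h1 h4).symm
    have e2 : g (t + c') + g c = g (t + c' + c) := (hgadd _ _ h3 h2).symm
    have : t + c + c' = t + c' + c := by ring
    rw [this] at e1
    linarith
  set G : ℝ → ℝ := fun t => g (t + (|t| + 1)) - g (|t| + 1) with hG
  have habs : ∀ t : ℝ, 0 ≤ t + (|t| + 1) := by
    intro t; have := neg_abs_le t; linarith
  have habs' : ∀ t : ℝ, 0 ≤ |t| + 1 := by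
    intro t; have := abs_nonneg t; linarith
  have hGg : ∀ t : ℝ, 0 ≤ t → G t = g t := by
    intro t ht
    have := gdiff t (|t| + 1) 0 (habs t) (habs' t) (by linarith) le_rfl
    simp only [hG]
    rw [this]; simp [hg0]
  have hGadd : ∀ s t : ℝ, G (s + t) = G s + G t := by
    intro s t
    set c : ℝ := |s| + |t| + 1 with hc
    have hcs : 0 ≤ s + c := by have := neg_abs_le s; have := abs_nonneg t; simp only [hc]; linarith
    have hct : 0 ≤ t + c := by have := neg_abs_le t; have := abs_nonneg s; simp only [hc]; linarith
    have hc0 : 0 ≤ c := by have := abs_nonneg s; have := abs_nonneg t; simp only [hc]; linarith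
    have hst2c : 0 ≤ (s + t) + (c + c) := by linarith
    have e1 : G s = g (s + c) - g c :=
      gdiff s (|s| + 1) c (habs s) (habs' s) hcs hc0
    have e2 : G t = g (t + c) - g c :=
      gdiff t (|t| + 1) c (habs t) (habs' t) hct hc0
    have e3 : G (s + t) = g ((s + t) + (c + c)) - g (c + c) :=
      gdiff (s+t) (|s+t| + 1) (c + c) (habs (s+t)) (habs' (s+t)) hst2c (by linarith)
    have e4 : g ((s + t) + (c + c)) = g (s + c) + g (t + c) := by
      have : (s + t) + (c + c) = (s + c) + (t + c) := by ring
      rw [this]; exact hgadd _ _ hcs hct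
    have e5 : g (c + c) = g c + g c := hgadd _ _ hc0 hc0
    rw [e1, e2, e3, e4, e5]; ring
  have hGcont : Continuous G := by
    have hv : Continuous (fun t : ℝ => |t| + 1) := continuous_abs.add continuous_const
    have hu : Continuous (fun t : ℝ => t + (|t| + 1)) := continuous_id.add hv
    have h1 : Continuous (fun t : ℝ => g (t + (|t| + 1))) :=
      hgcont.comp_continuous hu (fun t => habs t)
    have h2 : Continuous (fun t : ℝ => g (|t| + 1)) :=
      hgcont.comp_continuous hv (fun t => by simpa using habs' t)
    exact h1.sub h2
  -- G is linear
  have hGlin : ∀ t : ℝ, G t = t * G 1 := by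
    have hGhom : ∀ s t : ℝ, G (s + t) = G s + G t := hGadd
    let L := (AddMonoidHom.mk' G hGhom).toRealLinearMap hGcont
    intro t
    have : G t = L t := rfl
    rw [this]
    have : (t : ℝ) = t • (1:ℝ) := by simp
    rw [this, map_smul]
    simp [L]
    exact Or.inl rfl
  -- hence g t = t * g 1 for t ≥ 0
  have hglin : ∀ t : ℝ, 0 ≤ t → g t = t * g 1 := by
    intro t ht
    rw [← hGg t ht, hGlin t, hGg 1 zero_le_one]
  -- g 1 < 0
  have hg1neg : g 1 < 0 := by
    have hmem : Real.exp (-1) ∈ Set.Ioc (0:ℝ) 1 := hexp_mem 1 zero_le_one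
    have hlt : f (Real.exp (-1)) < f 1 := by
      exact hmono hmem h1 (Real.exp_lt_one_iff.mpr (by norm_num))
    have := Real.log_lt_log (hpos _ hmem) hlt
    simp only [hg]; linarith
  refine ⟨f 1, hf1, -g 1, by linarith, ?_⟩
  intro x hx
  have hlx : Real.log x ≤ 0 := Real.log_nonpos hx.1.le hx.2
  have ht : (0:ℝ) ≤ -Real.log x := by linarith
  have hexp : Real.exp (-(-Real.log x)) = x := by
    rw [neg_neg]; exact Real.exp_log hx.1
  have := hglin (-Real.log x) ht
  simp only [hg, hexp] at this
  have hfx : 0 < f x := hpos x hx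
  have hg1eq : g 1 = Real.log (f (Real.exp (-1))) - Real.log (f 1) := rfl
  have hlogfx : Real.log (f x) = Real.log (f 1) + (-Real.log x) * g 1 := by
    rw [hg1eq]; linarith
  have hrpow : x ^ (-g 1) = Real.exp (Real.log x * (-g 1)) :=
    Real.rpow_def_of_pos hx.1 _
  have hkey : f x = Real.exp (Real.log (f 1) + Real.log x * (-g 1)) := by
    rw [← Real.exp_log hfx]
    congr 1
    rw [hlogfx]; ring
  rw [hkey, Real.exp_add, Real.exp_log hf1, hrpow]
end
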